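/- For distinct g, g' ∈ Γ, the cosets V ⊕ g = {v ⊕ g : v ∈ V} and V ⊕ g' are disjoint; furthermore, for every r ∈ {±1}^n, the cosets V ⊕ (r ⊕ g) and V ⊕ (r ⊕ g') are disjoint. -/

import Mathlib

open Finset

lemma blockcard (t m : ℕ) (hm : 0 < m) (i : Fin t) :
    (Finset.univ.filter fun j : Fin (t * m) => (j : ℕ) / m = (i : ℕ)).card = m := by
  refine Eq.trans ?_ (Finset.card_fin m)
  refine Finset.card_nbij' (fun j => (⟨(j : ℕ) % m, Nat.mod_lt _ hm⟩ : Fin m))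
    (fun k => (⟨(i : ℕ) * m + (k : ℕ), by
      have h1 : (k : ℕ) < m := k.isLt
      have h2 : (i : ℕ) < t := i.isLt
      calc (i : ℕ) * m + (k : ℕ) < (i : ℕ) * m + m := by omega
        _ = ((i : ℕ) + 1) * m := by ring
        _ ≤ t * m := Nat.mul_le_mul_right m h2⟩ : Fin (t * m))) ?_ ?_ ?_ ?_
  · intro j _; exact Finset.mem_univ _
  · intro k _
    simp only [mem_coe, mem_filter, mem_univ, true_and]
    have h1 : (k : ℕ) < m := k.isLt
    rw [Nat.mul_comm, Nat.mul_add_div hm, Nat.div_eq_of_lt h1]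
    omega
  · intro j hj
    simp only [mem_coe, mem_filter, mem_univ, true_and] at hj
    ext
    simp only
    rw [← hj]
    exact Nat.div_add_mod' _ _
  · intro k _
    ext
    simp only
    rw [Nat.mul_comm, Nat.mul_add_mod]
    exact Nat.mod_eq_of_lt k.isLt

lemma prodeval (t m : ℕ) (T : Finset (Fin t)) (j : Fin (t * m)) (hj : (j : ℕ) / m < t) :
    (∏ i ∈ T, (if (j : ℕ) / m = (i : ℕ) then (-1 : ℝ) else 1)) =
      if (⟨(j : ℕ) / m, hj⟩ : Fin t) ∈ T then -1 else 1 := by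
  by_cases h : (⟨(j : ℕ) / m, hj⟩ : Fin t) ∈ T
  · rw [if_pos h, Finset.prod_eq_single (⟨(j : ℕ) / m, hj⟩ : Fin t), if_pos rfl]
    · intro b _ hb
      rw [if_neg]
      intro hc
      exact hb (Fin.ext hc.symm)
    · intro hc; exact absurd h hc
  · rw [if_neg h]
    apply Finset.prod_eq_one
    intro b hb
    rw [if_neg]
    intro hc
    exact h (by rwa [show (⟨(j : ℕ) / m, hj⟩ : Fin t) = b from Fin.ext hc])

lemma core (t m : ℕ) (ht : 0 < t) (hm : 0 < m)
    (g g' v v' : Fin (t * m) → ℝ)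
    (hg1 : ∀ j, g j = 1 ∨ g j = -1) (hg'1 : ∀ j, g' j = 1 ∨ g' j = -1)
    (hgc : ∀ i : Fin t, (((Finset.univ.filter (fun j : Fin (t * m) =>
        (j : ℕ) / m = (i : ℕ) ∧ g j = -1)).card : ℝ) < ((t * m : ℕ) : ℝ) / (2 * t)))
    (hg'c : ∀ i : Fin t, (((Finset.univ.filter (fun j : Fin (t * m) =>
        (j : ℕ) / m = (i : ℕ) ∧ g' j = -1)).card : ℝ) < ((t * m : ℕ) : ℝ) / (2 * t)))
    (T T' : Finset (Fin t))
    (hv : ∀ j : Fin (t * m), v j = ∏ i ∈ T, (if (j : ℕ) / m = (i : ℕ) then (-1 : ℝ) else 1))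
    (hv' : ∀ j : Fin (t * m), v' j = ∏ i ∈ T', (if (j : ℕ) / m = (i : ℕ) then (-1 : ℝ) else 1))
    (heq : ∀ j, v j * g j = v' j * g' j) : g = g' := by
  have hj : ∀ j : Fin (t * m), (j : ℕ) / m < t := by
    intro j
    exact (Nat.div_lt_iff_lt_mul hm).mpr j.isLt
  set I : Fin (t * m) → Fin t := fun j => ⟨(j : ℕ) / m, hj j⟩ with hI
  have hkey : ∀ j, g j =
      ((if I j ∈ T then (-1 : ℝ) else 1) * (if I j ∈ T' then (-1 : ℝ) else 1)) * g' j := by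
    intro j
    have e := heq j
    rw [hv j, hv' j, prodeval t m T j (hj j), prodeval t m T' j (hj j)] at e
    split_ifs at e ⊢ <;> linarith
  have hhalf : ((t * m : ℕ) : ℝ) / (2 * t) = (m : ℝ) / 2 := by
    have ht' : (t : ℝ) ≠ 0 := Nat.cast_ne_zero.mpr ht.ne'
    push_cast
    field_simp
  have hc : ∀ i : Fin t, (i ∈ T ↔ i ∈ T') := by
    intro i
    by_contra hne
    -- in either mismatch case, for every j in block i, g j = - g' j
    have hflip : ∀ j : Fin (t * m), (j : ℕ) / m = (i : ℕ) → g j = -g' j := by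
      intro j hji
      have hIj : I j = i := Fin.ext hji
      have := hkey j
      rw [hIj] at this
      rcases Classical.em (i ∈ T) with h1 | h1 <;> rcases Classical.em (i ∈ T') with h2 | h2
      · exact absurd (iff_of_true h1 h2) hne
      · simp only [if_pos h1, if_neg h2] at this; linarith
      · simp only [if_neg h1, if_pos h2] at this; linarith
      · exact absurd (iff_of_false h1 h2) hne
    set A := Finset.univ.filter (fun j : Fin (t * m) => (j : ℕ) / m = (i : ℕ) ∧ g j = -1)
    set B := Finset.univ.filter (fun j : Fin (t * m) => (j : ℕ) / m = (i : ℕ) ∧ g' j = -1)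
    have hdisj : Disjoint A B := by
      rw [Finset.disjoint_left]
      intro j hjA hjB
      simp only [A, B, mem_filter, mem_univ, true_and] at hjA hjB
      have := hflip j hjA.1
      rw [hjA.2, hjB.2] at this
      norm_num at this
    have hunion : A ∪ B = Finset.univ.filter (fun j : Fin (t * m) => (j : ℕ) / m = (i : ℕ)) := by
      ext j
      simp only [A, B, Finset.mem_union, mem_filter, mem_univ, true_and]
      constructor
      · rintro (⟨h1, _⟩ | ⟨h1, _⟩) <;> exact h1
      · intro h1
        rcases hg'1 j with h2 | h2
        · left
          refine ⟨h1, ?_⟩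
          rw [hflip j h1, h2]
        · exact Or.inr ⟨h1, h2⟩
    have hcard : A.card + B.card = m := by
      rw [← Finset.card_union_of_disjoint hdisj, hunion, blockcard t m hm i]
    have c1 := hgc i
    have c2 := hg'c i
    rw [hhalf] at c1 c2
    have : ((A.card : ℝ) + (B.card : ℝ)) = (m : ℝ) := by
      rw [← Nat.cast_add, hcard]
    linarith
  funext j
  rw [hkey j]
  by_cases h1 : I j ∈ T
  · have h2 : I j ∈ T' := (hc _).mp h1
    simp [h1, h2]
  · have h2 : I j ∉ T' := fun hh => h1 ((hc _).mpr hh)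
    simp [h1, h2]

/-- Let V ⊆ {±1}^n be the 𝔽₂-span of the block indicators 1_{S_1},…,1_{S_t}
(𝔽₂-addition ⊕ being componentwise real multiplication), and for an integer h with
0 ≤ h ≤ n/2 let Γ be the set of all g ∈ {±1}^n with w_H(g) ≤ h and fewer than n/(2t)
entries equal to −1 in each block S_i. For distinct g, g' ∈ Γ the cosets V ⊕ g and
V ⊕ g' are disjoint; furthermore, for every r ∈ {±1}^n the cosets V ⊕ (r ⊕ g) and
V ⊕ (r ⊕ g') are disjoint. -/
theorem stmt7 (t m : ℕ) (ht : 0 < t) (hm : 0 < m)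
    (h : ℕ) (hh : (h : ℝ) ≤ ((t * m : ℕ) : ℝ) / 2)
    (V : Set (Fin (t * m) → ℝ))
    (hV : ∀ v, v ∈ V ↔ ∃ T : Finset (Fin t),
      ∀ j : Fin (t * m), v j = ∏ i ∈ T, (if (j : ℕ) / m = (i : ℕ) then (-1 : ℝ) else 1))
    (Γ : Set (Fin (t * m) → ℝ))
    (hΓ : ∀ g, g ∈ Γ ↔
      (∀ j, g j = 1 ∨ g j = -1) ∧
      (Finset.univ.filter (fun j : Fin (t * m) => g j = -1)).card ≤ h ∧
      ∀ i : Fin t,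
        (((Finset.univ.filter (fun j : Fin (t * m) =>
            (j : ℕ) / m = (i : ℕ) ∧ g j = -1)).card : ℝ) < ((t * m : ℕ) : ℝ) / (2 * t))) :
    ∀ g ∈ Γ, ∀ g' ∈ Γ, g ≠ g' →
      (Disjoint {x | ∃ v ∈ V, x = fun j => v j * g j}
                {x | ∃ v ∈ V, x = fun j => v j * g' j}) ∧
      (∀ r : Fin (t * m) → ℝ, (∀ j, r j = 1 ∨ r j = -1) →
        Disjoint {x | ∃ v ∈ V, x = fun j => v j * (r j * g j)}
                 {x | ∃ v ∈ V, x = fun j => v j * (r j * g' j)}) := by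
  intro g hg g' hg' hne
  obtain ⟨hg1, -, hgc⟩ := (hΓ g).mp hg
  obtain ⟨hg'1, -, hg'c⟩ := (hΓ g').mp hg'
  constructor
  · rw [Set.disjoint_left]
    rintro x ⟨v, hvV, rfl⟩ ⟨v', hv'V, hx⟩
    obtain ⟨T, hT⟩ := (hV v).mp hvV
    obtain ⟨T', hT'⟩ := (hV v').mp hv'V
    exact hne (core t m ht hm g g' v v' hg1 hg'1 hgc hg'c T T' hT hT'
      (fun j => congrFun hx j))
  · intro r hr
    rw [Set.disjoint_left]
    rintro x ⟨v, hvV, rfl⟩ ⟨v', hv'V, hx⟩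
    obtain ⟨T, hT⟩ := (hV v).mp hvV
    obtain ⟨T', hT'⟩ := (hV v').mp hv'V
    have heq : ∀ j, v j * g j = v' j * g' j := by
      intro j
      have e := congrFun hx j
      rcases hr j with h1 | h1 <;> rw [h1] at e <;> ring_nf at e ⊢ <;> linarith
    exact hne (core t m ht hm g g' v v' hg1 hg'1 hgc hg'c T T' hT hT' heq)
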